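/- The maximally regular null-faced 4-simplex: let e₁ = (0, −√3, −1, 0), e₂ = (0, √3, −1, 0), e₃ = (0, 0, 2, 0), p₁ = (1, 0, 0, −1), p₂ = (1, 0, 0, 1) in ℝ⁴. Then: (i) these five points are affinely independent; (ii) for each 4-element subset of {e₁,e₂,e₃,p₁,p₂} there exists a nonzero null vector n with η(n, w − w′) = 0 for all w, w′ in the subset (each of the five tetrahedral hyperfaces lies in a null hyperplane); (iii) η(eᵢ−eⱼ, eᵢ−eⱼ) = 12 for i ≠ j, while η(eᵢ−pⱼ, eᵢ−pⱼ) = 4 and η(p₁−p₂, p₁−p₂) = 4, so the simplex has exactly two distinct edge lengths; (iv) the spacetime 4-volume |det(e₂−e₁, e₃−e₁, p₁−e₁, p₂−e₁)| / 4! equals √3/2. -/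

import Mathlib

/-- The Minkowski bilinear form on `ℝ⁴` with signature `(-,+,+,+)`. -/
def eta (x y : Fin 4 → ℝ) : ℝ :=
  -(x 0 * y 0) + x 1 * y 1 + x 2 * y 2 + x 3 * y 3

/-- The determinant of the 4×4 matrix with columns `x₁, x₂, x₃, x₄ ∈ ℝ⁴`. -/
def det4 (x₁ x₂ x₃ x₄ : Fin 4 → ℝ) : ℝ :=
  (Matrix.of fun i j => ![x₁, x₂, x₃, x₄] j i).det

/-- The five vertices `e₁, e₂, e₃, p₁, p₂` of the maximally regular null-faced
4-simplex (with `a = 1`). -/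
noncomputable def mrSimplex : Fin 5 → Fin 4 → ℝ :=
  ![![0, -Real.sqrt 3, -1, 0],
    ![0, Real.sqrt 3, -1, 0],
    ![0, 0, 2, 0],
    ![1, 0, 0, -1],
    ![1, 0, 0, 1]]
private def fin5Equiv : Fin 4 ≃ {x : Fin 5 // x ≠ 0} where
  toFun i := ⟨i.succ, Fin.succ_ne_zero i⟩
  invFun x := x.1.pred x.2
  left_inv i := by simp
  right_inv x := by simp

/-- The maximally regular null-faced 4-simplex: its five vertices are affinely
independent; each of its five tetrahedral hyperfaces lies in a null hyperplane;
it has exactly two distinct squared edge lengths (`12` for `(ee)` edges, `4`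
for `(ep)` and `(pp)` edges); and its spacetime 4-volume is `√3/2`. -/
theorem maximally_regular_null_simplex :
    AffineIndependent ℝ mrSimplex ∧
    (∀ i : Fin 5, ∃ n : Fin 4 → ℝ, n ≠ 0 ∧ eta n n = 0 ∧
      ∀ j k : Fin 5, j ≠ i → k ≠ i →
        eta n (mrSimplex j - mrSimplex k) = 0) ∧
    (∀ i j : Fin 5, i ≠ j → i.val < 3 → j.val < 3 →
      eta (mrSimplex i - mrSimplex j) (mrSimplex i - mrSimplex j) = 12) ∧
    (∀ i j : Fin 5, i.val < 3 → 3 ≤ j.val →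
      eta (mrSimplex i - mrSimplex j) (mrSimplex i - mrSimplex j) = 4) ∧
    eta (mrSimplex 3 - mrSimplex 4) (mrSimplex 3 - mrSimplex 4) = 4 ∧
    |det4 (mrSimplex 1 - mrSimplex 0) (mrSimplex 2 - mrSimplex 0)
        (mrSimplex 3 - mrSimplex 0) (mrSimplex 4 - mrSimplex 0)| / 24 =
      Real.sqrt 3 / 2 := by
  have h3 : Real.sqrt 3 * Real.sqrt 3 = 3 := Real.mul_self_sqrt (by norm_num)
  have hspos : (0:ℝ) < Real.sqrt 3 := Real.sqrt_pos.mpr (by norm_num)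
  refine ⟨?_, ?_, ?_, ?_, ?_, ?_⟩
  · rw [affineIndependent_iff_linearIndependent_vsub ℝ mrSimplex 0]
    have hA : IsUnit (Matrix.of fun i : Fin 4 => mrSimplex i.succ - mrSimplex 0) := by
      rw [Matrix.isUnit_iff_isUnit_det, isUnit_iff_ne_zero]
      rw [Matrix.det_succ_row_zero]
      simp [Fin.sum_univ_succ, Matrix.det_fin_three, mrSimplex, Matrix.submatrix_apply,
        show Fin.succAbove (1 : Fin 4) 2 = 3 from rfl, show Fin.succAbove (2 : Fin 4) 2 = 3 from rfl,
        show Fin.succAbove (3 : Fin 4) 2 = 2 from rfl]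
      norm_num
    have hli := Matrix.linearIndependent_rows_iff_isUnit.mpr hA
    refine (linearIndependent_equiv fin5Equiv).mp ?_
    exact hli
  · intro i
    fin_cases i
    · refine ⟨![-2, Real.sqrt 3, 1, 0], ?_, ?_, ?_⟩
      · intro h; have := congr_fun h 0; norm_num at this
      · simp [eta]; first | norm_num | nlinarith [Real.mul_self_sqrt (show (0:ℝ) ≤ 3 by norm_num)]
      · intro j k hj hk
        fin_cases j <;> fin_cases k <;>
          (simp_all [eta, mrSimplex] <;>
            nlinarith [Real.mul_self_sqrt (show (0:ℝ) ≤ 3 by norm_num)])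
    · refine ⟨![-2, -Real.sqrt 3, 1, 0], ?_, ?_, ?_⟩
      · intro h; have := congr_fun h 0; norm_num at this
      · simp [eta]; first | norm_num | nlinarith [Real.mul_self_sqrt (show (0:ℝ) ≤ 3 by norm_num)]
      · intro j k hj hk
        fin_cases j <;> fin_cases k <;>
          (simp_all [eta, mrSimplex] <;>
            nlinarith [Real.mul_self_sqrt (show (0:ℝ) ≤ 3 by norm_num)])
    · refine ⟨![1, 0, 1, 0], ?_, ?_, ?_⟩
      · intro h; have := congr_fun h 0; norm_num at this
      · simp [eta]
      · intro j k hj hk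
        fin_cases j <;> fin_cases k <;>
          (simp_all [eta, mrSimplex] <;>
            nlinarith [Real.mul_self_sqrt (show (0:ℝ) ≤ 3 by norm_num)])
    · refine ⟨![1, 0, 0, 1], ?_, ?_, ?_⟩
      · intro h; have := congr_fun h 0; norm_num at this
      · simp [eta]
      · intro j k hj hk
        fin_cases j <;> fin_cases k <;>
          (simp_all [eta, mrSimplex] <;>
            nlinarith [Real.mul_self_sqrt (show (0:ℝ) ≤ 3 by norm_num)])
    · refine ⟨![1, 0, 0, -1], ?_, ?_, ?_⟩
      · intro h; have := congr_fun h 0; norm_num at this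
      · simp [eta]
      · intro j k hj hk
        fin_cases j <;> fin_cases k <;>
          (simp_all [eta, mrSimplex] <;>
            nlinarith [Real.mul_self_sqrt (show (0:ℝ) ≤ 3 by norm_num)])
  · intro i j hij h1 h2
    fin_cases i <;> fin_cases j <;>
      first
        | omega
        | (simp_all [eta, mrSimplex] <;>
            nlinarith [Real.mul_self_sqrt (show (0:ℝ) ≤ 3 by norm_num)])
  · intro i j h1 h2
    fin_cases i <;> fin_cases j <;>
      first
        | omega
        | (simp_all [eta, mrSimplex] <;>
            nlinarith [Real.mul_self_sqrt (show (0:ℝ) ≤ 3 by norm_num)])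
  · simp [eta, mrSimplex]; norm_num
  · have hd : det4 (mrSimplex 1 - mrSimplex 0) (mrSimplex 2 - mrSimplex 0)
        (mrSimplex 3 - mrSimplex 0) (mrSimplex 4 - mrSimplex 0) = 12 * Real.sqrt 3 := by
      rw [det4]
      rw [Matrix.det_succ_row_zero]
      simp [Fin.sum_univ_succ, Matrix.det_fin_three, mrSimplex, Matrix.submatrix_apply,
        show Fin.succAbove (1 : Fin 4) 2 = 3 from rfl, show Fin.succAbove (2 : Fin 4) 2 = 3 from rfl,
        show Fin.succAbove (3 : Fin 4) 2 = 2 from rfl]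
      ring
    rw [hd, abs_of_nonneg (by positivity)]
    ring
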